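/- Let G be a simple connected graph on n ≥ 2 vertices. Then for every integer k with 1 ≤ k ≤ n − 1, the sum of the k largest Laplacian eigenvalues of G satisfies μ₁(G) + … + μ_k(G) ≥ 1 + d₁(G) + … + d_k(G), where d₁(G) ≥ … ≥ d_k(G) are the k largest vertex degrees of G. -/

import Mathlib

open Matrix Finset



open Matrix

/-- The signless Laplacian matrix `Q(G) = D + A` of a simple graph, over `ℝ`. -/
def sLapMatrix {m : ℕ} (G : SimpleGraph (Fin m)) [DecidableRel G.Adj] :
    Matrix (Fin m) (Fin m) ℝ :=
  G.degMatrix ℝ + G.adjMatrix ℝ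

/-- `q` lists the eigenvalues of `A` (with multiplicity) in non-increasing order. -/
def IsEigSeq {m : ℕ} (A : Matrix (Fin m) (Fin m) ℝ) (q : Fin m → ℝ) : Prop :=
  Antitone q ∧ ∃ (hA : A.IsHermitian) (σ : Equiv.Perm (Fin m)),
    ∀ i, q i = hA.eigenvalues (σ i)

/-- `d` lists the degrees of `G` (with multiplicity) in non-increasing order. -/
def IsDegSeq {m : ℕ} (G : SimpleGraph (Fin m)) [DecidableRel G.Adj] (d : Fin m → ℕ) : Prop :=
  Antitone d ∧ ∃ σ : Equiv.Perm (Fin m), ∀ i, d i = G.degree (σ i)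


section KyFan
variable {n : ℕ}

lemma card_filter_val_lt {n : ℕ} (k : ℕ) (hk : k < n) :
    (Finset.univ.filter (fun i : Fin n => i.val < k)).card = k := by
  have h : (Finset.univ.filter (fun i : Fin n => i.val < k)) = Finset.Iio ⟨k, hk⟩ := by
    ext i; simp [Fin.lt_def]
  rw [h, Fin.card_Iio]

lemma pivot_sum (mu : Fin n → ℝ) (hanti : Antitone mu) (w : Fin n → ℝ)
    (hw0 : ∀ i, 0 ≤ w i) (hw1 : ∀ i, w i ≤ 1) (k : ℕ) (hk : k < n)
    (hsum : ∑ i, w i = k) :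
    ∑ i, mu i * w i ≤ ∑ i ∈ Finset.univ.filter (fun i : Fin n => i.val < k), mu i := by
  set F := Finset.univ.filter (fun i : Fin n => i.val < k) with hF
  set p : ℝ := mu ⟨k, hk⟩ with hp
  have hsplit : ∑ i, mu i * w i = (∑ i ∈ F, mu i * w i) + ∑ i ∈ Fᶜ, mu i * w i :=
    (Finset.sum_add_sum_compl F _).symm
  have hsplitw : ∑ i, w i = (∑ i ∈ F, w i) + ∑ i ∈ Fᶜ, w i :=
    (Finset.sum_add_sum_compl F _).symm
  have hwc : ∑ i ∈ Fᶜ, w i = (k : ℝ) - ∑ i ∈ F, w i := by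
    rw [← hsum]; linarith [hsplitw]
  have h1 : ∑ i ∈ Fᶜ, mu i * w i ≤ p * ((k : ℝ) - ∑ i ∈ F, w i) := by
    have h2 : ∑ i ∈ Fᶜ, mu i * w i ≤ ∑ i ∈ Fᶜ, p * w i := by
      refine Finset.sum_le_sum (fun i hi => ?_)
      have hik : ¬ i.val < k := by simpa [hF] using hi
      exact mul_le_mul_of_nonneg_right (hanti (by simp [Fin.le_def]; omega)) (hw0 i)
    rw [← Finset.mul_sum, hwc] at h2
    exact h2
  have h3 : p * ((k : ℝ) - ∑ i ∈ F, w i) ≤ ∑ i ∈ F, mu i - ∑ i ∈ F, mu i * w i := by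
    have hcard : ((F.card : ℝ)) = k := by rw [hF, card_filter_val_lt k hk]
    have h4 : ∑ i ∈ F, p * (1 - w i) ≤ ∑ i ∈ F, mu i * (1 - w i) := by
      refine Finset.sum_le_sum (fun i hi => ?_)
      have hik : i.val < k := by simpa [hF] using hi
      have : p ≤ mu i := hanti (by simp [Fin.le_def]; omega)
      exact mul_le_mul_of_nonneg_right this (by linarith [hw1 i])
    have e1 : ∑ i ∈ F, p * (1 - w i) = p * ((k:ℝ) - ∑ i ∈ F, w i) := by
      rw [← Finset.mul_sum, Finset.sum_sub_distrib, Finset.sum_const, nsmul_eq_mul, mul_one, hcard]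
    have e2 : ∑ i ∈ F, mu i * (1 - w i) = ∑ i ∈ F, mu i - ∑ i ∈ F, mu i * w i := by
      rw [← Finset.sum_sub_distrib]; congr 1; ext i; ring
    linarith
  linarith

end KyFan


lemma psd_diag_nonneg {n : ℕ} {M : Matrix (Fin n) (Fin n) ℝ} (h : M.PosSemidef) (j : Fin n) :
    0 ≤ M j j := by
  have := h.dotProduct_mulVec_nonneg (Pi.single j 1)
  simpa [dotProduct, mulVec, Pi.single_apply] using this

lemma trace_conj_diag {n : ℕ} (U X : Matrix (Fin n) (Fin n) ℝ) (f : Fin n → ℝ) :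
    ((U * Matrix.diagonal f * star U) * X).trace = ∑ j, f j * (star U * X * U) j j := by
  have h1 : (U * Matrix.diagonal f * star U) * X = U * (Matrix.diagonal f * (star U * X)) := by
    simp [Matrix.mul_assoc]
  rw [h1, Matrix.trace_mul_comm, Matrix.mul_assoc]
  simp [Matrix.trace, Matrix.diag, Matrix.diagonal_mul, Matrix.mul_assoc]

lemma kyfan_aux {n : ℕ} (U : Matrix (Fin n) (Fin n) ℝ) (hUU : star U * U = 1)
    (hUU' : U * star U = 1) (f : Fin n → ℝ) (X : Matrix (Fin n) (Fin n) ℝ)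
    (hX : X.PosSemidef) (hX1 : (1 - X).PosSemidef)
    (k : ℕ) (hk : k < n) (htr : X.trace = (k : ℝ))
    (mu : Fin n → ℝ) (hanti : Antitone mu) (σ : Equiv.Perm (Fin n))
    (hmuσ : ∀ i, mu i = f (σ i)) :
    ((U * Matrix.diagonal f * star U) * X).trace
      ≤ ∑ i ∈ Finset.univ.filter (fun i : Fin n => i.val < k), mu i := by
  set M : Matrix (Fin n) (Fin n) ℝ := star U * X * U with hM
  have hMpsd : M.PosSemidef := hX.conjTranspose_mul_mul_same U
  have hM1psd : (1 - M).PosSemidef := by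
    have h : (1 : Matrix (Fin n) (Fin n) ℝ) - M = star U * (1 - X) * U := by
      rw [Matrix.mul_sub, Matrix.sub_mul, Matrix.mul_one, hUU]
    rw [h]; exact hX1.conjTranspose_mul_mul_same U
  have hw0 : ∀ j, 0 ≤ M j j := fun j => psd_diag_nonneg hMpsd j
  have hw1 : ∀ j, M j j ≤ 1 := by
    intro j
    have := psd_diag_nonneg hM1psd j
    simp only [Matrix.sub_apply, Matrix.one_apply_eq] at this
    linarith
  have htrM : M.trace = (k : ℝ) := by
    rw [hM, Matrix.trace_mul_comm, ← Matrix.mul_assoc, hUU', Matrix.one_mul, htr]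
  rw [trace_conj_diag]
  have hre : ∑ j, f j * (star U * X * U) j j = ∑ i, mu i * M (σ i) (σ i) := by
    rw [← Equiv.sum_comp σ (fun j => f j * (star U * X * U) j j)]
    exact Finset.sum_congr rfl (fun i _ => by rw [hmuσ i, hM])
  rw [hre]
  exact pivot_sum mu hanti (fun i => M (σ i) (σ i)) (fun i => hw0 _) (fun i => hw1 _) k hk
    (by
      have : ∑ i, M (σ i) (σ i) = M.trace := by
        rw [Matrix.trace]; exact Equiv.sum_comp σ (fun j => M j j)
      rw [this, htrM])


lemma vmv_mul_vmv {n : ℕ} (a b c d : Fin n → ℝ) :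
    vecMulVec a b * vecMulVec c d = (b ⬝ᵥ c) • vecMulVec a d := by
  ext i j
  simp only [Matrix.mul_apply, Matrix.vecMulVec_apply, Matrix.smul_apply, dotProduct,
    smul_eq_mul]
  rw [Finset.sum_mul]
  exact Finset.sum_congr rfl (fun x _ => by ring)

lemma diag_mul_vmv {n : ℕ} (f a b : Fin n → ℝ) :
    Matrix.diagonal f * vecMulVec a b = vecMulVec (fun v => f v * a v) b := by
  ext i j
  simp [Matrix.diagonal_mul, Matrix.vecMulVec_apply, mul_assoc]

lemma vmv_mul_diag {n : ℕ} (f a b : Fin n → ℝ) :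
    vecMulVec a b * Matrix.diagonal f = vecMulVec a (fun v => b v * f v) := by
  ext i j
  simp [Matrix.mul_diagonal, Matrix.vecMulVec_apply, mul_assoc]

lemma trace_vmv {n : ℕ} (a b : Fin n → ℝ) : (vecMulVec a b).trace = a ⬝ᵥ b := by
  simp [Matrix.trace, Matrix.diag, Matrix.vecMulVec_apply, dotProduct]

lemma trace_mul_vmv {n : ℕ} (L : Matrix (Fin n) (Fin n) ℝ) (a b : Fin n → ℝ) :
    (L * vecMulVec a b).trace = b ⬝ᵥ (L *ᵥ a) := by
  simp only [Matrix.trace, Matrix.diag, Matrix.mul_apply, Matrix.vecMulVec_apply, dotProduct,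
    Matrix.mulVec, dotProduct]
  exact Finset.sum_congr rfl (fun x _ => by rw [Finset.mul_sum]; exact Finset.sum_congr rfl (fun y _ => by ring))


section Proj
variable {n : ℕ} (ξ y : Fin n → ℝ) (kk N β : ℝ)

noncomputable def Xmat : Matrix (Fin n) (Fin n) ℝ :=
  Matrix.diagonal ξ - kk⁻¹ • vecMulVec ξ ξ + N⁻¹ • vecMulVec y y

variable (hξ01 : ∀ v, ξ v * ξ v = ξ v)
  (hconst : (fun v => ξ v * y v) = fun v => β * ξ v)
  (hξξ : ξ ⬝ᵥ ξ = kk) (hyy : y ⬝ᵥ y = N)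
  (hk : kk ≠ 0) (hN : N ≠ 0)

include hξ01 hconst hξξ hyy hk hN in
lemma Xmat_idem : (Xmat ξ y kk N) * (Xmat ξ y kk N) = Xmat ξ y kk N := by
  have hsq : (fun v => ξ v * ξ v) = ξ := funext hξ01
  have hdd : Matrix.diagonal ξ * Matrix.diagonal ξ = Matrix.diagonal ξ := by
    rw [Matrix.diagonal_mul_diagonal, hsq]
  have hdJ : Matrix.diagonal ξ * vecMulVec ξ ξ = vecMulVec ξ ξ := by
    rw [diag_mul_vmv, hsq]
  have hJd : vecMulVec ξ ξ * Matrix.diagonal ξ = vecMulVec ξ ξ := by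
    rw [vmv_mul_diag, hsq]
  have hdY : Matrix.diagonal ξ * vecMulVec y y = β • vecMulVec ξ y := by
    rw [diag_mul_vmv, hconst]
    ext i j; simp [Matrix.vecMulVec_apply]; ring
  have hYd : vecMulVec y y * Matrix.diagonal ξ = β • vecMulVec y ξ := by
    rw [vmv_mul_diag]
    have h2 : (fun v => y v * ξ v) = fun v => β * ξ v := by
      funext v; rw [mul_comm]; exact congrFun hconst v
    rw [h2]
    ext i j; simp [Matrix.vecMulVec_apply]; ring
  have hξy : ξ ⬝ᵥ y = β * kk := by
    unfold dotProduct
    calc ∑ v, ξ v * y v = ∑ v, β * ξ v := by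
          rw [funext_iff] at hconst; exact Finset.sum_congr rfl (fun v _ => hconst v)
    _ = β * kk := by
          rw [← hξξ]; unfold dotProduct; rw [Finset.mul_sum]
          exact Finset.sum_congr rfl (fun v _ => by rw [hξ01 v])
  have hyξ : y ⬝ᵥ ξ = β * kk := by rw [dotProduct_comm]; exact hξy
  unfold Xmat
  simp only [Matrix.add_mul, Matrix.mul_add, Matrix.sub_mul, Matrix.mul_sub, Matrix.smul_mul,
    Matrix.mul_smul, hdd, hdJ, hJd, hdY, hYd, vmv_mul_vmv, hξξ, hξy, hyξ, hyy, smul_smul]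
  match_scalars <;> field_simp <;> ring

lemma psd_of_herm_idem {m : ℕ} {X : Matrix (Fin m) (Fin m) ℝ} (hh : X.IsHermitian)
    (hi : X * X = X) : X.PosSemidef := by
  have h := Matrix.posSemidef_conjTranspose_mul_self X
  rw [hh.eq, hi] at h
  exact h

lemma vmv_herm {m : ℕ} (a : Fin m → ℝ) : (vecMulVec a a).IsHermitian := by
  ext i j
  simp [Matrix.conjTranspose_apply, Matrix.vecMulVec_apply, mul_comm]

lemma Xmat_herm : (Xmat ξ y kk N).IsHermitian := by
  ext i j
  by_cases h : i = j
  · subst h; rfl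
  · simp [Xmat, Matrix.conjTranspose_apply, Matrix.vecMulVec_apply, Matrix.diagonal_apply,
      h, Ne.symm h]
    ring

include hξ01 hconst hξξ hyy hk hN in
lemma Xmat_psd : (Xmat ξ y kk N).PosSemidef :=
  psd_of_herm_idem (Xmat_herm ξ y kk N) (Xmat_idem ξ y kk N β hξ01 hconst hξξ hyy hk hN)

include hξ01 hconst hξξ hyy hk hN in
lemma Xmat_one_sub_psd : ((1 : Matrix (Fin n) (Fin n) ℝ) - Xmat ξ y kk N).PosSemidef := by
  apply psd_of_herm_idem
  · exact (Matrix.isHermitian_one).sub (Xmat_herm ξ y kk N)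
  · have hi := Xmat_idem ξ y kk N β hξ01 hconst hξξ hyy hk hN
    simp only [Matrix.mul_sub, Matrix.sub_mul, Matrix.mul_one, Matrix.one_mul, one_mul, mul_one, hi]
    abel

include hξ01 hξξ hyy hk hN in
lemma Xmat_trace : (Xmat ξ y kk N).trace = kk := by
  unfold Xmat
  rw [Matrix.trace_add, Matrix.trace_sub, Matrix.trace_smul, Matrix.trace_smul,
    trace_vmv, trace_vmv, Matrix.trace_diagonal, hξξ, hyy]
  have hsum : ∑ v, ξ v = kk := by
    rw [← hξξ]; unfold dotProduct; exact Finset.sum_congr rfl (fun v _ => (hξ01 v).symm)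
  rw [hsum, smul_eq_mul, smul_eq_mul, inv_mul_cancel₀ hk, inv_mul_cancel₀ hN]
  ring

end Proj


variable {n : ℕ} (G : SimpleGraph (Fin n)) [DecidableRel G.Adj]

lemma qform_eq (x : Fin n → ℝ) :
    x ⬝ᵥ (G.lapMatrix ℝ *ᵥ x) =
      (∑ i, ∑ j, if G.Adj i j then (x i - x j)^2 else 0) / 2 := by
  rw [← Matrix.toLinearMap₂'_apply', SimpleGraph.lapMatrix_toLinearMap₂']

lemma double_split (S : Finset (Fin n)) (f : Fin n → Fin n → ℝ) :
    ∑ i, ∑ j, f i j = ((∑ i ∈ S, ∑ j ∈ S, f i j) + ∑ i ∈ S, ∑ j ∈ Sᶜ, f i j)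
      + ((∑ i ∈ Sᶜ, ∑ j ∈ S, f i j) + ∑ i ∈ Sᶜ, ∑ j ∈ Sᶜ, f i j) := by
  rw [← Finset.sum_add_sum_compl S (fun i => ∑ j, f i j)]
  congr 1 <;>
  · rw [← Finset.sum_add_distrib]
    exact Finset.sum_congr rfl fun i _ => (Finset.sum_add_sum_compl S _).symm

lemma cross_swap (S : Finset (Fin n)) (f : Fin n → ℝ) :
    ∑ i ∈ S, ∑ j ∈ Sᶜ, (if G.Adj i j then (1:ℝ) else 0) * f j
      = ∑ j ∈ Sᶜ, (∑ i ∈ S, if G.Adj j i then (1:ℝ) else 0) * f j := by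
  rw [Finset.sum_comm]
  refine Finset.sum_congr rfl (fun j _ => ?_)
  rw [Finset.sum_mul]
  refine Finset.sum_congr rfl (fun i _ => ?_)
  rw [if_congr (G.adj_comm i j) rfl rfl]

lemma qform_xi (S : Finset (Fin n)) :
    (fun v => if v ∈ S then (1:ℝ) else 0) ⬝ᵥ
      (G.lapMatrix ℝ *ᵥ (fun v => if v ∈ S then (1:ℝ) else 0))
    = ∑ t ∈ Sᶜ, ∑ v ∈ S, (if G.Adj t v then (1:ℝ) else 0) := by
  rw [qform_eq, double_split S]
  have hSS : (∑ i ∈ S, ∑ j ∈ S, if G.Adj i j then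
      ((if i ∈ S then (1:ℝ) else 0) - (if j ∈ S then (1:ℝ) else 0))^2 else 0) = 0 :=
    Finset.sum_eq_zero fun i hi => Finset.sum_eq_zero fun j hj => by simp [hi, hj]
  have hCC : (∑ i ∈ Sᶜ, ∑ j ∈ Sᶜ, if G.Adj i j then
      ((if i ∈ S then (1:ℝ) else 0) - (if j ∈ S then (1:ℝ) else 0))^2 else 0) = 0 :=
    Finset.sum_eq_zero fun i hi => Finset.sum_eq_zero fun j hj => by
      simp [Finset.mem_compl.mp hi, Finset.mem_compl.mp hj]
  have hSC : (∑ i ∈ S, ∑ j ∈ Sᶜ, if G.Adj i j then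
      ((if i ∈ S then (1:ℝ) else 0) - (if j ∈ S then (1:ℝ) else 0))^2 else 0)
      = ∑ t ∈ Sᶜ, ∑ v ∈ S, (if G.Adj t v then (1:ℝ) else 0) := by
    have h1 : (∑ i ∈ S, ∑ j ∈ Sᶜ, if G.Adj i j then
        ((if i ∈ S then (1:ℝ) else 0) - (if j ∈ S then (1:ℝ) else 0))^2 else 0)
        = ∑ i ∈ S, ∑ j ∈ Sᶜ, (if G.Adj i j then (1:ℝ) else 0) * 1 := by
      refine Finset.sum_congr rfl fun i hi => Finset.sum_congr rfl fun j hj => ?_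
      simp [hi, Finset.mem_compl.mp hj]
    rw [h1, cross_swap G S (fun _ => (1:ℝ))]
    exact Finset.sum_congr rfl fun j _ => by rw [mul_one]
  have hCS : (∑ i ∈ Sᶜ, ∑ j ∈ S, if G.Adj i j then
      ((if i ∈ S then (1:ℝ) else 0) - (if j ∈ S then (1:ℝ) else 0))^2 else 0)
      = ∑ t ∈ Sᶜ, ∑ v ∈ S, (if G.Adj t v then (1:ℝ) else 0) := by
    refine Finset.sum_congr rfl fun i hi => Finset.sum_congr rfl fun j hj => ?_
    simp [Finset.mem_compl.mp hi, hj]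
  rw [hSS, hCC, hSC, hCS]
  ring

lemma qform_y (S : Finset (Fin n)) (c : Fin n → ℝ)
    (hc : ∀ t, c t = ∑ v ∈ S, (if G.Adj t v then (1:ℝ) else 0)) (kk C2 : ℝ) :
    (fun v => if v ∈ S then -C2 else kk * c v) ⬝ᵥ
      (G.lapMatrix ℝ *ᵥ (fun v => if v ∈ S then -C2 else kk * c v))
    ≥ ∑ t ∈ Sᶜ, c t * (C2 + kk * c t)^2 := by
  rw [qform_eq, double_split S]
  set y : Fin n → ℝ := fun v => if v ∈ S then -C2 else kk * c v with hy
  have hterm_nonneg : ∀ (i j : Fin n), (0:ℝ) ≤ if G.Adj i j then (y i - y j)^2 else 0 := by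
    intro i j; positivity
  have hSS : (0:ℝ) ≤ ∑ i ∈ S, ∑ j ∈ S, if G.Adj i j then (y i - y j)^2 else 0 :=
    Finset.sum_nonneg fun i _ => Finset.sum_nonneg fun j _ => hterm_nonneg i j
  have hCC : (0:ℝ) ≤ ∑ i ∈ Sᶜ, ∑ j ∈ Sᶜ, if G.Adj i j then (y i - y j)^2 else 0 :=
    Finset.sum_nonneg fun i _ => Finset.sum_nonneg fun j _ => hterm_nonneg i j
  have hSC : (∑ i ∈ S, ∑ j ∈ Sᶜ, if G.Adj i j then (y i - y j)^2 else 0)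
      = ∑ t ∈ Sᶜ, c t * (C2 + kk * c t)^2 := by
    have h1 : (∑ i ∈ S, ∑ j ∈ Sᶜ, if G.Adj i j then (y i - y j)^2 else 0)
        = ∑ i ∈ S, ∑ j ∈ Sᶜ, (if G.Adj i j then (1:ℝ) else 0) * (C2 + kk * c j)^2 := by
      refine Finset.sum_congr rfl fun i hi => Finset.sum_congr rfl fun j hj => ?_
      simp only [hy, hi, if_pos, Finset.mem_compl.mp hj, if_neg, ite_mul, one_mul, zero_mul]
      by_cases h : G.Adj i j <;> simp [h, hi, Finset.mem_compl.mp hj] <;> ring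
    rw [h1, cross_swap G S (fun j => (C2 + kk * c j)^2)]
    exact Finset.sum_congr rfl fun t ht => by rw [← hc t]
  have hCS : (∑ i ∈ Sᶜ, ∑ j ∈ S, if G.Adj i j then (y i - y j)^2 else 0)
      = ∑ t ∈ Sᶜ, c t * (C2 + kk * c t)^2 := by
    refine Finset.sum_congr rfl fun i hi => ?_
    have hi' := Finset.mem_compl.mp hi
    have h1 : (∑ j ∈ S, if G.Adj i j then (y i - y j)^2 else 0)
        = ∑ j ∈ S, (if G.Adj i j then (1:ℝ) else 0) * (C2 + kk * c i)^2 := by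
      refine Finset.sum_congr rfl fun j hj => ?_
      by_cases h : G.Adj i j <;> simp [h, hi', hj, hy] <;> ring
    rw [h1, ← Finset.sum_mul, ← hc i]
  rw [hSC, hCS]
  set W := ∑ t ∈ Sᶜ, c t * (C2 + kk * c t)^2
  linarith


lemma exists_crossing {n : ℕ} (G : SimpleGraph (Fin n)) (S : Finset (Fin n))
    {u w : Fin n} (p : G.Walk u w) (hu : u ∈ S) (hw : w ∉ S) :
    ∃ a b, G.Adj a b ∧ a ∈ S ∧ b ∉ S := by
  induction p with
  | nil => exact absurd hu hw
  | @cons u v w h q ih =>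
    by_cases hv : v ∈ S
    · exact ih hv hw
    · exact ⟨u, v, h, hu, hv⟩


theorem grone_inequality {n : ℕ} (hn : 2 ≤ n)
    (G : SimpleGraph (Fin n)) [DecidableRel G.Adj] (hG : G.Connected)
    (mu : Fin n → ℝ) (hmu : IsEigSeq (G.lapMatrix ℝ) mu)
    (d : Fin n → ℕ) (hd : IsDegSeq G d)
    (k : ℕ) (hk1 : 1 ≤ k) (hkn : k ≤ n - 1) :
    ∑ i ∈ Finset.univ.filter (fun i : Fin n => i.val < k), mu i ≥
      1 + ∑ i ∈ Finset.univ.filter (fun i : Fin n => i.val < k), (d i : ℝ) := by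
  classical
  obtain ⟨hmu_anti, hA, σ, hmuσ⟩ := hmu
  obtain ⟨hd_anti, σd, hdσ⟩ := hd
  have hkn' : k < n := by omega
  have hk0 : (0:ℝ) < (k:ℝ) := by exact_mod_cast Nat.lt_of_lt_of_le Nat.zero_lt_one hk1
  set F : Finset (Fin n) := Finset.univ.filter (fun i : Fin n => i.val < k) with hF
  set S : Finset (Fin n) := F.image σd with hS
  have hScard : S.card = k := by
    rw [hS, Finset.card_image_of_injective _ σd.injective, hF, card_filter_val_lt k hkn']
  set c : Fin n → ℝ := fun t => ∑ v ∈ S, (if G.Adj t v then (1:ℝ) else 0) with hc_def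
  have hcnat : ∀ t, ∃ m : ℕ, c t = (m:ℝ) := by
    intro t
    refine ⟨(S.filter (fun v => G.Adj t v)).card, ?_⟩
    rw [hc_def]
    simp [Finset.sum_boole]
  have hcnn : ∀ t, 0 ≤ c t := fun t => Finset.sum_nonneg fun v _ => by positivity
  set E := ∑ t ∈ Sᶜ, c t with hE_def
  set C2 := ∑ t ∈ Sᶜ, (c t)^2 with hC2_def
  set C3 := ∑ t ∈ Sᶜ, (c t)^3 with hC3_def
  have hpoint1 : ∀ t, c t ≤ (c t)^2 := by
    intro t; obtain ⟨m, hm⟩ := hcnat t; rw [hm]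
    exact_mod_cast Nat.le_self_pow two_ne_zero m
  have hpoint2 : ∀ t, (c t)^2 ≤ (c t)^3 := by
    intro t; obtain ⟨m, hm⟩ := hcnat t; rw [hm]
    rcases Nat.eq_zero_or_pos m with h | h
    · subst h; norm_num
    · exact_mod_cast Nat.pow_le_pow_right h (by norm_num)
  have hEC2 : E ≤ C2 := Finset.sum_le_sum fun t _ => hpoint1 t
  have hC23 : C2 ≤ C3 := Finset.sum_le_sum fun t _ => hpoint2 t
  -- crossing edge
  have hSne : S.Nonempty := Finset.card_pos.mp (by rw [hScard]; omega)
  have hScne : Sᶜ.Nonempty := by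
    rw [← Finset.card_pos, Finset.card_compl, hScard]
    simp only [Fintype.card_fin]
    omega
  obtain ⟨a, ha⟩ := hSne
  obtain ⟨b0, hb0⟩ := hScne
  obtain ⟨p⟩ := hG.preconnected a b0
  obtain ⟨a', b', hadj, haS, hbS⟩ := exists_crossing G S p ha (Finset.mem_compl.mp hb0)
  have hcb : (1:ℝ) ≤ c b' := by
    rw [hc_def]
    have := Finset.single_le_sum (f := fun v => if G.Adj b' v then (1:ℝ) else 0)
      (fun v _ => by positivity) haS
    simpa [hadj.symm] using this
  have hE1 : (1:ℝ) ≤ E :=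
    le_trans hcb (Finset.single_le_sum (fun t _ => hcnn t) (Finset.mem_compl.mpr hbS))
  have hC2pos : (0:ℝ) < C2 := lt_of_lt_of_le (by linarith) hEC2
  set kk := (k:ℝ) with hkk_def
  set N := kk*C2^2 + kk^2*C2 with hN_def
  have hNpos : (0:ℝ) < N := by
    rw [hN_def]
    have h1 : (0:ℝ) < kk*C2^2 := mul_pos hk0 (pow_pos hC2pos 2)
    have h2 : (0:ℝ) < kk^2*C2 := mul_pos (pow_pos hk0 2) hC2pos
    linarith
  set ξ : Fin n → ℝ := fun v => if v ∈ S then 1 else 0 with hξ_def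
  set y : Fin n → ℝ := fun v => if v ∈ S then -C2 else kk * c v with hy_def
  have hXne : ∀ v ∈ S, y v = -C2 := fun v hv => by simp [hy_def, hv]
  have hyout : ∀ v, v ∉ S → y v = kk * c v := fun v hv => by simp [hy_def, hv]
  have hξ01 : ∀ v, ξ v * ξ v = ξ v := by
    intro v; by_cases h : v ∈ S <;> simp [hξ_def, h]
  have hconst : (fun v => ξ v * y v) = fun v => (-C2) * ξ v := by
    funext v; by_cases h : v ∈ S <;> simp [hξ_def, hy_def, h]
  have hξξ : ξ ⬝ᵥ ξ = kk := by
    rw [dotProduct, Finset.sum_congr rfl (fun v _ => hξ01 v), hξ_def]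
    rw [Finset.sum_ite_mem, Finset.univ_inter, Finset.sum_const, hScard]
    simp [hkk_def]
  have hyy : y ⬝ᵥ y = N := by
    rw [dotProduct, ← Finset.sum_add_sum_compl S (fun v => y v * y v)]
    have h1 : ∑ v ∈ S, y v * y v = kk * C2^2 := by
      rw [Finset.sum_congr rfl (fun v hv =>
        show y v * y v = C2^2 from by rw [hXne v hv]; ring)]
      rw [Finset.sum_const, hScard, nsmul_eq_mul, hkk_def]
    have h2 : ∑ v ∈ Sᶜ, y v * y v = kk^2 * C2 := by
      rw [Finset.sum_congr rfl (fun v hv =>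
        show y v * y v = kk^2 * (c v)^2 from by
          rw [hyout v (Finset.mem_compl.mp hv)]; ring)]
      rw [← Finset.mul_sum, hC2_def]
    rw [h1, h2, hN_def]
  have hkkne : kk ≠ 0 := ne_of_gt hk0
  have hNne : N ≠ 0 := ne_of_gt hNpos
  have hXpsd := Xmat_psd ξ y kk N (-C2) hξ01 hconst hξξ hyy hkkne hNne
  have h1psd := Xmat_one_sub_psd ξ y kk N (-C2) hξ01 hconst hξξ hyy hkkne hNne
  have htrX := Xmat_trace ξ y kk N hξ01 hξξ hyy hkkne hNne
  set U : Matrix (Fin n) (Fin n) ℝ :=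
    (Matrix.IsHermitian.eigenvectorUnitary hA : Matrix (Fin n) (Fin n) ℝ) with hU_def
  have hUU : star U * U = 1 := Unitary.coe_star_mul_self _
  have hUU' : U * star U = 1 := Unitary.coe_mul_star_self _
  have hspec : G.lapMatrix ℝ = U * Matrix.diagonal hA.eigenvalues * star U := by
    simpa using hA.spectral_theorem
  have hky : ((G.lapMatrix ℝ) * Xmat ξ y kk N).trace ≤ ∑ i ∈ F, mu i := by
    rw [hspec]
    exact kyfan_aux U hUU hUU' hA.eigenvalues (Xmat ξ y kk N) hXpsd h1psd k hkn'
      (htrX.trans hkk_def) mu hmu_anti σ hmuσ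
  have hdiagL : ∀ v, (G.lapMatrix ℝ) v v = (G.degree v : ℝ) := by
    intro v
    simp [SimpleGraph.lapMatrix, SimpleGraph.degMatrix, Matrix.sub_apply,
      Matrix.diagonal_apply_eq, SimpleGraph.adjMatrix_apply]
  have htrLdiag : ((G.lapMatrix ℝ) * Matrix.diagonal ξ).trace = ∑ v ∈ S, (G.degree v : ℝ) := by
    rw [Matrix.trace]
    rw [Finset.sum_congr rfl (fun v (_ : v ∈ Finset.univ) =>
      show (G.lapMatrix ℝ * Matrix.diagonal ξ).diag v = if v ∈ S then (G.degree v : ℝ) else 0 from by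
        rw [Matrix.diag_apply, Matrix.mul_diagonal, hdiagL, hξ_def]
        by_cases hvS : v ∈ S <;> simp [hvS])]
    rw [Finset.sum_ite_mem, Finset.univ_inter]
  have htrace_split : ((G.lapMatrix ℝ) * Xmat ξ y kk N).trace
      = (∑ v ∈ S, (G.degree v:ℝ)) - kk⁻¹ * (ξ ⬝ᵥ (G.lapMatrix ℝ *ᵥ ξ))
        + N⁻¹ * (y ⬝ᵥ (G.lapMatrix ℝ *ᵥ y)) := by
    unfold Xmat
    rw [Matrix.mul_add, Matrix.mul_sub, Matrix.trace_add, Matrix.trace_sub,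
      Matrix.mul_smul, Matrix.mul_smul, Matrix.trace_smul, Matrix.trace_smul,
      trace_mul_vmv, trace_mul_vmv, htrLdiag]
    simp only [smul_eq_mul]
  have hQξ : ξ ⬝ᵥ (G.lapMatrix ℝ *ᵥ ξ) = E := by
    rw [hξ_def, qform_xi G S, hE_def]
  have hQy : y ⬝ᵥ (G.lapMatrix ℝ *ᵥ y) ≥ C2^2*E + 2*kk*C2^2 + kk^2*C3 := by
    have h0 := qform_y G S c (fun t => by rw [hc_def]) kk C2
    rw [← hy_def] at h0
    have hexp : ∑ t ∈ Sᶜ, c t * (C2 + kk*c t)^2 = C2^2*E + 2*kk*C2^2 + kk^2*C3 := by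
      rw [Finset.sum_congr rfl (fun t _ =>
        show c t * (C2 + kk*c t)^2 = C2^2 * c t + (2*kk*C2)*(c t)^2 + kk^2*(c t)^3 from by ring)]
      rw [Finset.sum_add_distrib, Finset.sum_add_distrib, ← Finset.mul_sum, ← Finset.mul_sum,
        ← Finset.mul_sum, ← hE_def, ← hC2_def, ← hC3_def]
      ring
    rw [hexp] at h0
    exact h0
  have hT1 : ∑ v ∈ S, (G.degree v : ℝ) = ∑ i ∈ F, (d i : ℝ) := by
    rw [hS, Finset.sum_image (fun i _ j _ h => σd.injective h)]
    exact Finset.sum_congr rfl (fun i _ => by rw [hdσ i])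
  have hkey : kk * (C2^2*E + 2*kk*C2^2 + kk^2*C3) ≥ (E + kk) * N := by
    rw [hN_def]
    have t1 : (0:ℝ) ≤ C2*(C2 - E) := mul_nonneg hC2pos.le (by linarith)
    have t2 : (0:ℝ) ≤ kk*(C3 - C2) := mul_nonneg hk0.le (by linarith)
    nlinarith [mul_nonneg (mul_nonneg hk0.le hk0.le) (add_nonneg t1 t2)]
  have hlow : 1 + ∑ i ∈ F, (d i:ℝ) ≤ ((G.lapMatrix ℝ) * Xmat ξ y kk N).trace := by
    rw [htrace_split, hQξ, hT1]
    have hstep : 1 + kk⁻¹ * E ≤ N⁻¹ * (y ⬝ᵥ (G.lapMatrix ℝ *ᵥ y)) := by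
      have h2 : 1 + kk⁻¹ * E ≤ N⁻¹ * (C2^2*E + 2*kk*C2^2 + kk^2*C3) := by
        rw [← sub_nonneg]
        have hh : N⁻¹ * (C2^2*E + 2*kk*C2^2 + kk^2*C3) - (1 + kk⁻¹ * E)
            = (kk * (C2^2*E + 2*kk*C2^2 + kk^2*C3) - (E + kk) * N) / (kk * N) := by
          field_simp
          ring
        rw [hh]
        exact div_nonneg (by linarith) (mul_pos hk0 hNpos).le
      have h3 : N⁻¹ * (C2^2*E + 2*kk*C2^2 + kk^2*C3) ≤ N⁻¹ * (y ⬝ᵥ (G.lapMatrix ℝ *ᵥ y)) :=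
        mul_le_mul_of_nonneg_left hQy (inv_nonneg.mpr hNpos.le)
      linarith
    linarith
  linarith [hky, hlow]
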